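/- arXiv:2007.11300 — 2 statements merged into one kernel-verified Lean document; each statement's English description precedes it below -/
import Mathlib

section
/- Let 0 < γ < 1 and ν > 1/2. Then for all x > 0, ∫_0^x e^{−γt} t^ν I_{ν+1}(t) dt > (1/(1−γ)) · ( 1 − 4ν(4ν+1) / ((2ν−1)(1−γ)x) ) · e^{−γx} x^ν I_ν(x). -/
open Real MeasureTheory

/-- Modified Bessel function of the first kind, `I_ν(x) = ∑_{k} (x/2)^{ν+2k} / (Γ(ν+k+1) k!)`. -/
noncomputable def besselI (ν x : ℝ) : ℝ :=
  ∑' k : ℕ, (x / 2) ^ (ν + 2 * (k : ℝ)) / (Real.Gamma (ν + (k : ℝ) + 1) * (Nat.factorial k : ℝ))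

/-- Modified Bessel function of the second kind, `K_ν(x) = ∫_0^∞ e^{-x cosh t} cosh(ν t) dt`. -/
noncomputable def besselK (ν x : ℝ) : ℝ :=
  ∫ t in Set.Ioi (0 : ℝ), Real.exp (-x * Real.cosh t) * Real.cosh (ν * t)

/-- Lower incomplete gamma function `γ(a, x) = ∫_0^x t^{a-1} e^{-t} dt`. -/
noncomputable def lowerIncGamma (a x : ℝ) : ℝ :=
  ∫ t in (0 : ℝ)..x, t ^ (a - 1) * Real.exp (-t)

namespace SB


noncomputable def term (μ : ℝ) (k : ℕ) (x : ℝ) : ℝ :=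
  (x / 2) ^ (μ + 2 * (k : ℝ)) / (Real.Gamma (μ + (k : ℝ) + 1) * (Nat.factorial k : ℝ))

lemma besselI_eq (μ x : ℝ) : besselI μ x = ∑' k, term μ k x := rfl

lemma gamma_pos {μ : ℝ} (hμ : 0 < μ) (k : ℕ) : 0 < Real.Gamma (μ + (k : ℝ) + 1) :=
  Real.Gamma_pos_of_pos (by positivity)

lemma gamma_lb {μ : ℝ} (hμ : 0 < μ) (k : ℕ) :
    Real.Gamma (μ + 1) ≤ Real.Gamma (μ + (k : ℝ) + 1) := by
  induction k with
  | zero => simp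
  | succ n ih =>
      have h2 : (1 : ℝ) ≤ μ + (n : ℝ) + 1 := by
        have : (0:ℝ) ≤ n := Nat.cast_nonneg n
        linarith
      have key : Real.Gamma (μ + ((n : ℕ) + 1 : ℕ) + 1) = (μ + (n:ℝ) + 1) * Real.Gamma (μ + (n:ℝ) + 1) := by
        rw [show (μ + ((n : ℕ) + 1 : ℕ) + 1 : ℝ) = (μ + (n:ℝ) + 1) + 1 by push_cast; ring]
        exact Real.Gamma_add_one (by positivity)
      rw [key]
      nlinarith [gamma_pos hμ n]

lemma term_nonneg {μ : ℝ} (hμ : 0 < μ) (k : ℕ) {x : ℝ} (hx : 0 ≤ x) : 0 ≤ term μ k x := by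
  unfold term
  have := gamma_pos hμ k
  have h2 : (0:ℝ) < (Nat.factorial k : ℝ) := by positivity
  have h3 : (0:ℝ) ≤ (x/2) ^ (μ + 2*(k:ℝ)) := Real.rpow_nonneg (by linarith) _
  positivity

lemma term_pos {μ : ℝ} (hμ : 0 < μ) (k : ℕ) {x : ℝ} (hx : 0 < x) : 0 < term μ k x := by
  unfold term
  have := gamma_pos hμ k
  have h2 : (0:ℝ) < (Nat.factorial k : ℝ) := by positivity
  have h3 : (0:ℝ) < (x/2) ^ (μ + 2*(k:ℝ)) := Real.rpow_pos_of_pos (by linarith) _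
  positivity

lemma term_mono {μ : ℝ} (hμ : 0 < μ) (k : ℕ) {x b : ℝ} (hx : 0 ≤ x) (hb : x ≤ b) :
    term μ k x ≤ term μ k b := by
  unfold term
  have hg := gamma_pos hμ k
  have hf : (0:ℝ) < (Nat.factorial k : ℝ) := by positivity
  have hnum : (x/2) ^ (μ + 2*(k:ℝ)) ≤ (b/2) ^ (μ + 2*(k:ℝ)) :=
    Real.rpow_le_rpow (by linarith) (by linarith) (by positivity)
  exact div_le_div_of_nonneg_right hnum (by positivity) |>.trans_eq rfl

lemma rpow_split {μ : ℝ} (hμ : 0 < μ) (k : ℕ) {x : ℝ} (hx : 0 ≤ x) :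
    (x / 2) ^ (μ + 2 * (k : ℝ)) = (x / 2) ^ μ * ((x / 2) ^ 2) ^ k := by
  rw [Real.rpow_add' (by linarith) (by positivity)]
  congr 1
  rw [show (2 * (k : ℝ)) = ((2 * k : ℕ) : ℝ) by push_cast; ring,
    Real.rpow_natCast, pow_mul]

lemma term_le_bound {μ : ℝ} (hμ : 0 < μ) (k : ℕ) {x : ℝ} (hx : 0 ≤ x) :
    term μ k x ≤ ((x/2) ^ μ / Real.Gamma (μ + 1)) * (((x/2)^2) ^ k / (Nat.factorial k : ℝ)) := by
  unfold term
  rw [rpow_split hμ k hx]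
  rw [div_eq_mul_inv, mul_inv]
  have hg := gamma_pos hμ k
  have hg1 : (0:ℝ) < Real.Gamma (μ + 1) := Real.Gamma_pos_of_pos (by linarith)
  have hf : (0:ℝ) < (Nat.factorial k : ℝ) := by positivity
  have h3 : (0:ℝ) ≤ (x/2) ^ μ := Real.rpow_nonneg (by linarith) _
  have h4 : (0:ℝ) ≤ ((x/2)^2) ^ k := by positivity
  have h5 : (Real.Gamma (μ + (k:ℝ) + 1))⁻¹ ≤ (Real.Gamma (μ+1))⁻¹ :=
    inv_anti₀ hg1 (gamma_lb hμ k)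
  have step : (x/2) ^ μ * ((x/2)^2) ^ k * ((Real.Gamma (μ + (k:ℝ) + 1))⁻¹ * ((Nat.factorial k : ℝ))⁻¹)
      ≤ (x/2) ^ μ * ((x/2)^2) ^ k * ((Real.Gamma (μ+1))⁻¹ * ((Nat.factorial k : ℝ))⁻¹) := by
    apply mul_le_mul_of_nonneg_left _ (by positivity)
    apply mul_le_mul_of_nonneg_right h5 (by positivity)
  calc (x/2) ^ μ * ((x/2)^2) ^ k * ((Real.Gamma (μ + (k:ℝ) + 1))⁻¹ * ((Nat.factorial k : ℝ))⁻¹)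
      ≤ (x/2) ^ μ * ((x/2)^2) ^ k * ((Real.Gamma (μ+1))⁻¹ * ((Nat.factorial k : ℝ))⁻¹) := step
    _ = ((x/2) ^ μ / Real.Gamma (μ + 1)) * (((x/2)^2) ^ k / (Nat.factorial k : ℝ)) := by
        ring

lemma summable_bound {μ : ℝ} (x : ℝ) :
    Summable (fun k : ℕ => ((x/2) ^ μ / Real.Gamma (μ + 1)) * (((x/2)^2) ^ k / (Nat.factorial k : ℝ))) :=
  (Real.summable_pow_div_factorial _).mul_left _

lemma summable_term {μ : ℝ} (hμ : 0 < μ) {x : ℝ} (hx : 0 ≤ x) :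
    Summable (fun k => term μ k x) :=
  Summable.of_nonneg_of_le (fun k => term_nonneg hμ k hx) (fun k => term_le_bound hμ k hx)
    (summable_bound x)

lemma besselI_pos {μ : ℝ} (hμ : 0 < μ) {x : ℝ} (hx : 0 < x) : 0 < besselI μ x := by
  rw [besselI_eq]
  exact Summable.tsum_pos (summable_term hμ hx.le) (fun k => term_nonneg hμ k hx.le) 0 (term_pos hμ 0 hx)

lemma besselI_le {μ : ℝ} (hμ : 0 < μ) {x : ℝ} (hx : 0 ≤ x) :
    besselI μ x ≤ (x/2) ^ μ / Real.Gamma (μ + 1) * Real.exp ((x/2)^2) := by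
  rw [besselI_eq]
  have h1 : ∑' k : ℕ, ((x/2) ^ μ / Real.Gamma (μ + 1)) * (((x/2)^2) ^ k / (Nat.factorial k : ℝ))
      = (x/2) ^ μ / Real.Gamma (μ + 1) * Real.exp ((x/2)^2) := by
    rw [tsum_mul_left, Real.exp_eq_exp_ℝ, NormedSpace.exp_eq_tsum_div]
  rw [← h1]
  exact Summable.tsum_le_tsum (fun k => term_le_bound hμ k hx) (summable_term hμ hx) (summable_bound x)

lemma le_besselI {μ : ℝ} (hμ : 0 < μ) {x : ℝ} (hx : 0 ≤ x) :
    (x/2) ^ μ / Real.Gamma (μ + 1) ≤ besselI μ x := by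
  rw [besselI_eq]
  have h0 : term μ 0 x = (x/2) ^ μ / Real.Gamma (μ + 1) := by
    unfold term; norm_num
  rw [← h0]
  exact Summable.le_tsum (summable_term hμ hx) 0 (fun j _ => term_nonneg hμ j hx)

lemma continuous_term {μ : ℝ} (hμ : 0 < μ) (k : ℕ) : Continuous (fun x => term μ k x) := by
  unfold term
  apply Continuous.div_const
  exact (continuous_id.div_const 2).rpow_const (fun x => Or.inr (by positivity))

lemma continuousOn_besselI {μ : ℝ} (hμ : 0 < μ) {b : ℝ} (hb : 0 ≤ b) :
    ContinuousOn (besselI μ) (Set.Icc 0 b) := by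
  rw [continuousOn_iff_continuous_restrict]
  have : Continuous fun x : Set.Icc (0:ℝ) b => ∑' k, term μ k x := by
    apply continuous_tsum (u := fun k => term μ k b)
    · intro k; exact (continuous_term hμ k).comp continuous_subtype_val
    · exact summable_term hμ hb
    · rintro k ⟨x, hx0, hxb⟩
      rw [Real.norm_eq_abs, abs_of_nonneg (term_nonneg hμ k hx0)]
      exact term_mono hμ k hx0 hxb
  exact this

noncomputable def dterm (μ : ℝ) (k : ℕ) (x : ℝ) : ℝ :=
  (μ + 2*(k:ℝ)) * (x/2) ^ (μ + 2*(k:ℝ) - 1) /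
    (2 * (Real.Gamma (μ + (k:ℝ) + 1) * (Nat.factorial k : ℝ)))

lemma hasDerivAt_term {μ : ℝ} (k : ℕ) {x : ℝ} (hx : x ≠ 0) :
    HasDerivAt (term μ k) (dterm μ k x) x := by
  have h1 : HasDerivAt (fun y : ℝ => y/2) (1/2) x := (hasDerivAt_id x).div_const 2
  have h2 : HasDerivAt (fun y : ℝ => (y/2) ^ (μ+2*(k:ℝ)))
      ((μ+2*(k:ℝ)) * (x/2)^(μ+2*(k:ℝ)-1) * (1/2)) x :=
    (Real.hasDerivAt_rpow_const (p := μ+2*(k:ℝ)) (Or.inl (by simpa using hx))).comp x h1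
  have h3 := h2.div_const (Real.Gamma (μ + (k:ℝ) + 1) * (Nat.factorial k : ℝ))
  refine h3.congr_deriv ?_
  unfold dterm
  ring

lemma dterm_nonneg {μ : ℝ} (hμ : 0 < μ) (k : ℕ) {x : ℝ} (hx : 0 < x) : 0 ≤ dterm μ k x := by
  unfold dterm
  have := gamma_pos hμ k
  have h2 : (0:ℝ) < (Nat.factorial k : ℝ) := by positivity
  have h3 : (0:ℝ) ≤ (x/2) ^ (μ + 2*(k:ℝ) - 1) := (Real.rpow_pos_of_pos (by linarith) _).le
  positivity

lemma dterm_bound {μ : ℝ} (hμ : 0 < μ) (k : ℕ) {r R y : ℝ} (hr : 0 < r) (hy : y ∈ Set.Ioo r R) :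
    ‖dterm μ k y‖ ≤ ((μ + 2) * max ((r/2)^(μ-1)) ((R/2)^(μ-1)) / (2 * Real.Gamma (μ+1)))
      * ((2 * (R/2)^2) ^ k / (Nat.factorial k : ℝ)) := by
  obtain ⟨hy1, hy2⟩ := hy
  have hy0 : 0 < y := hr.trans hy1
  have hR : 0 < R := hy0.trans hy2
  rw [Real.norm_eq_abs, abs_of_nonneg (dterm_nonneg hμ k hy0)]
  unfold dterm
  have hsplit : (y/2) ^ (μ + 2*(k:ℝ) - 1) = (y/2)^(μ-1) * ((y/2)^2)^k := by
    rw [show μ + 2*(k:ℝ) - 1 = (μ - 1) + 2*(k:ℝ) by ring,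
      Real.rpow_add (by linarith)]
    congr 1
    rw [show (2 * (k : ℝ)) = ((2 * k : ℕ) : ℝ) by push_cast; ring,
      Real.rpow_natCast, pow_mul]
  rw [hsplit]
  have hM : (y/2)^(μ-1) ≤ max ((r/2)^(μ-1)) ((R/2)^(μ-1)) := by
    rcases le_or_gt 0 (μ - 1) with h | h
    · exact le_max_of_le_right (Real.rpow_le_rpow (by linarith) (by linarith) h)
    · exact le_max_of_le_left (Real.rpow_le_rpow_of_nonpos (by linarith) (by linarith) h.le)
  have hpow : ((y/2)^2)^k ≤ ((R/2)^2)^k := by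
    apply pow_le_pow_left₀ (by positivity)
    nlinarith
  have hcoef : μ + 2*(k:ℝ) ≤ (μ + 2) * 2^k := by
    have h1 : (k : ℝ) ≤ 2^k := by
      exact_mod_cast (Nat.lt_two_pow_self (n := k)).le
    have h2 : (1:ℝ) ≤ 2^k := by
      exact_mod_cast Nat.one_le_two_pow
    nlinarith
  have hg := gamma_pos hμ k
  have hg1 : (0:ℝ) < Real.Gamma (μ+1) := Real.Gamma_pos_of_pos (by linarith)
  have hf : (0:ℝ) < (Nat.factorial k : ℝ) := by positivity
  have hginv : (Real.Gamma (μ + (k:ℝ) + 1))⁻¹ ≤ (Real.Gamma (μ+1))⁻¹ :=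
    inv_anti₀ hg1 (gamma_lb hμ k)
  have hMpos : 0 < max ((r/2)^(μ-1)) ((R/2)^(μ-1)) :=
    lt_max_of_lt_left (Real.rpow_pos_of_pos (by linarith) _)
  have hynn : (0:ℝ) ≤ (y/2)^(μ-1) := (Real.rpow_pos_of_pos (by linarith) _).le
  have hppos : (0:ℝ) ≤ ((y/2)^2)^k := by positivity
  have step : (μ + 2*(k:ℝ)) * ((y/2)^(μ-1) * ((y/2)^2)^k) /
      (2 * (Real.Gamma (μ + (k:ℝ) + 1) * (Nat.factorial k : ℝ)))
      ≤ ((μ+2) * 2^k) * (max ((r/2)^(μ-1)) ((R/2)^(μ-1)) * ((R/2)^2)^k) /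
        (2 * (Real.Gamma (μ+1) * (Nat.factorial k : ℝ))) := by
    apply div_le_div₀ (by positivity)
      (mul_le_mul hcoef (mul_le_mul hM hpow hppos hMpos.le) (by positivity) (by positivity))
      (by positivity)
    nlinarith [gamma_lb hμ k]
  refine step.trans_eq ?_
  rw [mul_pow]
  field_simp

lemma hasDerivAt_besselI {μ : ℝ} (hμ : 0 < μ) {x : ℝ} (hx : 0 < x) :
    HasDerivAt (besselI μ) (∑' k, dterm μ k x) x := by
  have key : HasDerivAt (fun z => ∑' k, term μ k z) (∑' k, dterm μ k x) x := by
    apply hasDerivAt_tsum_of_isPreconnected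
      (u := fun k => ((μ + 2) * max ((x/2/2)^(μ-1)) (((x+1)/2)^(μ-1)) / (2 * Real.Gamma (μ+1)))
      * ((2 * ((x+1)/2)^2) ^ k / (Nat.factorial k : ℝ)))
      (ht := isOpen_Ioo (a := x/2) (b := x+1))
      (h't := isPreconnected_Ioo) (y₀ := x)
    · exact ((Real.summable_pow_div_factorial _).mul_left _)
    · intro k y hyt
      exact hasDerivAt_term k (lt_trans (half_pos hx) hyt.1).ne'
    · intro k y hyt
      exact dterm_bound hμ k (half_pos hx) hyt
    · exact ⟨by linarith, by linarith⟩
    · exact summable_term hμ hx.le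
    · exact ⟨by linarith, by linarith⟩
  have : besselI μ = fun z => ∑' k, term μ k z := funext fun z => besselI_eq μ z
  rw [this]
  exact key

/-! ### termwise identities -/

noncomputable def gterm (μ : ℝ) (k : ℕ) (x : ℝ) : ℝ :=
  (k : ℝ) * (x/2) ^ (μ + 2*(k:ℝ) - 1) / (Real.Gamma (μ + (k:ℝ) + 1) * (Nat.factorial k : ℝ))

lemma dterm_eq {μ : ℝ} (k : ℕ) {x : ℝ} (hx : 0 < x) (hμ : 0 < μ) :
    dterm μ k x = (μ/x) * term μ k x + gterm μ k x := by
  unfold dterm term gterm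
  have h2 : (x/2) ^ (μ + 2*(k:ℝ)) = (x/2) ^ (μ + 2*(k:ℝ) - 1) * (x/2) := by
    rw [show μ + 2*(k:ℝ) = (μ + 2*(k:ℝ) - 1) + 1 by ring,
      Real.rpow_add (by linarith : (0:ℝ) < x/2), Real.rpow_one]
    ring_nf
  rw [h2]
  have hg := (gamma_pos hμ k).ne'
  have hf : ((Nat.factorial k : ℝ)) ≠ 0 := by positivity
  field_simp

lemma gterm_succ {μ : ℝ} (hμ : 0 < μ) (j : ℕ) {x : ℝ} (hx : 0 < x) :
    gterm μ (j+1) x = term (μ+1) j x := by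
  have hg : Real.Gamma ((μ+1) + (j:ℝ) + 1) ≠ 0 := (gamma_pos (by linarith) j).ne'
  have hf : ((Nat.factorial j : ℝ)) ≠ 0 := by positivity
  have hj : ((j:ℝ)+1) ≠ 0 := by positivity
  unfold gterm term
  rw [Nat.factorial_succ]
  push_cast
  rw [show μ + 2*((j:ℝ)+1) - 1 = (μ+1) + 2*(j:ℝ) by ring,
      show μ + ((j:ℝ)+1) + 1 = (μ+1) + (j:ℝ) + 1 by ring]
  field_simp

lemma summable_gterm {μ : ℝ} (hμ : 0 < μ) {x : ℝ} (hx : 0 < x) :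
    Summable (fun k => gterm μ k x) := by
  apply (summable_nat_add_iff 1).1
  have : (fun n : ℕ => gterm μ (n+1) x) = fun n => term (μ+1) n x :=
    funext fun n => gterm_succ hμ n hx
  rw [this]
  exact summable_term (by linarith) hx.le

lemma tsum_dterm {μ : ℝ} (hμ : 0 < μ) {x : ℝ} (hx : 0 < x) :
    ∑' k, dterm μ k x = besselI (μ+1) x + (μ/x) * besselI μ x := by
  have hsum_t := summable_term hμ hx.le
  have hsum_g := summable_gterm hμ hx
  calc ∑' k, dterm μ k x = ∑' k, ((μ/x) * term μ k x + gterm μ k x) :=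
        tsum_congr (fun k => dterm_eq k hx hμ)
    _ = (μ/x) * besselI μ x + ∑' k, gterm μ k x := by
        rw [Summable.tsum_add (hsum_t.mul_left _) hsum_g, tsum_mul_left, besselI_eq]
    _ = (μ/x) * besselI μ x + besselI (μ+1) x := by
        congr 1
        rw [Summable.tsum_eq_zero_add hsum_g]
        simp only [gterm, Nat.cast_zero, zero_mul, zero_div, zero_add]
        rw [besselI_eq]
        exact tsum_congr (fun j => gterm_succ hμ j hx)
    _ = besselI (μ+1) x + (μ/x) * besselI μ x := by ring

lemma besselI_hasDeriv {μ : ℝ} (hμ : 0 < μ) {x : ℝ} (hx : 0 < x) :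
    HasDerivAt (besselI μ) (besselI (μ+1) x + (μ/x) * besselI μ x) x := by
  have := hasDerivAt_besselI hμ hx
  rwa [tsum_dterm hμ hx] at this

/-! ### recurrence -/

lemma term_sub {μ : ℝ} (hμ : 0 < μ) (k : ℕ) {x : ℝ} (hx : 0 < x) :
    term μ k x - (2*(μ+1)/x) * term (μ+1) k x
      = (k:ℝ) * (x/2) ^ (μ + 2*(k:ℝ)) / (Real.Gamma (μ + (k:ℝ) + 2) * (Nat.factorial k : ℝ)) := by
  unfold term
  have hΓ : Real.Gamma (μ + (k:ℝ) + 2) = (μ + (k:ℝ) + 1) * Real.Gamma (μ + (k:ℝ) + 1) := by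
    rw [show μ + (k:ℝ) + 2 = (μ + (k:ℝ) + 1) + 1 by ring]
    exact Real.Gamma_add_one (by positivity)
  have hΓ' : Real.Gamma ((μ+1) + (k:ℝ) + 1) = (μ + (k:ℝ) + 1) * Real.Gamma (μ + (k:ℝ) + 1) := by
    rw [show (μ+1) + (k:ℝ) + 1 = (μ + (k:ℝ) + 1) + 1 by ring]
    exact Real.Gamma_add_one (by positivity)
  have h2 : (x/2) ^ ((μ+1) + 2*(k:ℝ)) = (x/2) ^ (μ + 2*(k:ℝ)) * (x/2) := by
    rw [show (μ+1) + 2*(k:ℝ) = (μ + 2*(k:ℝ)) + 1 by ring,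
      Real.rpow_add (by linarith : (0:ℝ) < x/2), Real.rpow_one]
  rw [hΓ, hΓ', h2]
  have hg := (gamma_pos hμ k).ne'
  have hf : ((Nat.factorial k : ℝ)) ≠ 0 := by positivity
  have hμk : (μ + (k:ℝ) + 1) ≠ 0 := by positivity
  field_simp
  ring

lemma rterm_succ {μ : ℝ} (hμ : 0 < μ) (j : ℕ) {x : ℝ} (hx : 0 < x) :
    ((j:ℝ)+1) * (x/2) ^ (μ + 2*((j:ℝ)+1)) / (Real.Gamma (μ + ((j:ℝ)+1) + 2) * (Nat.factorial (j+1) : ℝ))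
      = term (μ+2) j x := by
  have hg : Real.Gamma ((μ+2) + (j:ℝ) + 1) ≠ 0 := (gamma_pos (by linarith : (0:ℝ) < μ+2) j).ne'
  have hf : ((Nat.factorial j : ℝ)) ≠ 0 := by positivity
  have hj : ((j:ℝ)+1) ≠ 0 := by positivity
  unfold term
  rw [Nat.factorial_succ]
  push_cast
  rw [show μ + 2*((j:ℝ)+1) = (μ+2) + 2*(j:ℝ) by ring,
      show μ + ((j:ℝ)+1) + 2 = (μ+2) + (j:ℝ) + 1 by ring]
  field_simp

lemma besselI_rec {μ : ℝ} (hμ : 0 < μ) {x : ℝ} (hx : 0 < x) :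
    besselI μ x = besselI (μ+2) x + (2*(μ+1)/x) * besselI (μ+1) x := by
  have hsum_t := summable_term hμ hx.le
  have hsum_t1 := summable_term (by linarith : (0:ℝ) < μ+1) hx.le
  have key : besselI μ x - (2*(μ+1)/x) * besselI (μ+1) x = besselI (μ+2) x := by
    rw [besselI_eq, besselI_eq, ← tsum_mul_left, ← Summable.tsum_sub hsum_t (hsum_t1.mul_left _)]
    have heq : ∀ k : ℕ, term μ k x - (2*(μ+1)/x) * term (μ+1) k x
        = (k:ℝ) * (x/2) ^ (μ + 2*(k:ℝ)) / (Real.Gamma (μ + (k:ℝ) + 2) * (Nat.factorial k : ℝ)) :=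
      fun k => term_sub hμ k hx
    rw [tsum_congr heq]
    have hsum_r : Summable (fun k : ℕ =>
        (k:ℝ) * (x/2) ^ (μ + 2*(k:ℝ)) / (Real.Gamma (μ + (k:ℝ) + 2) * (Nat.factorial k : ℝ))) := by
      have : (fun k : ℕ => (k:ℝ) * (x/2) ^ (μ + 2*(k:ℝ)) / (Real.Gamma (μ + (k:ℝ) + 2) * (Nat.factorial k : ℝ)))
          = fun k => term μ k x - (2*(μ+1)/x) * term (μ+1) k x := funext fun k => (term_sub hμ k hx).symm
      rw [this]
      exact hsum_t.sub (hsum_t1.mul_left _)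
    rw [Summable.tsum_eq_zero_add hsum_r]
    simp only [Nat.cast_zero, zero_mul, zero_div, zero_add]
    rw [besselI_eq]
    apply tsum_congr
    intro j
    have := rterm_succ hμ j hx
    push_cast at this ⊢
    exact this
  linarith [key]

lemma besselI_hasDeriv' {μ : ℝ} (hμ : 0 < μ) {x : ℝ} (hx : 0 < x) :
    HasDerivAt (besselI (μ+1)) (besselI μ x - ((μ+1)/x) * besselI (μ+1) x) x := by
  have h := besselI_hasDeriv (by linarith : (0:ℝ) < μ+1) hx
  have hrec := besselI_rec hμ hx
  have heq : besselI (μ+1+1) x + ((μ+1)/x) * besselI (μ+1) x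
      = besselI μ x - ((μ+1)/x) * besselI (μ+1) x := by
    rw [show μ+1+1 = μ+2 by ring]
    field_simp at hrec ⊢
    linarith [hrec]
  rwa [heq] at h

lemma small_t {μ : ℝ} (hμ : 1/2 < μ) {t : ℝ} (ht0 : 0 < t) (ht1 : t ≤ 1) :
    besselI (μ+1) t < besselI μ t := by
  have hμ0 : 0 < μ := by linarith
  have hg1 : 0 < Real.Gamma (μ+1) := Real.Gamma_pos_of_pos (by linarith)
  have h1 : besselI (μ+1) t ≤ (t/2) ^ (μ+1) / Real.Gamma (μ+2) * Real.exp ((t/2)^2) := by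
    have := besselI_le (μ := μ+1) (by linarith) ht0.le
    rwa [show μ+1+1 = μ+2 by ring] at this
  have h2 : (t/2) ^ μ / Real.Gamma (μ+1) ≤ besselI μ t := le_besselI hμ0 ht0.le
  have hΓ2 : Real.Gamma (μ+2) = (μ+1) * Real.Gamma (μ+1) := by
    rw [show μ+2 = (μ+1)+1 by ring]
    exact Real.Gamma_add_one (by positivity)
  have hsplit : (t/2) ^ (μ+1) = (t/2) ^ μ * (t/2) :=  by
    rw [Real.rpow_add (by linarith : (0:ℝ) < t/2), Real.rpow_one]
  have he : Real.exp ((t/2)^2) ≤ Real.exp 1 := by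
    apply Real.exp_le_exp.2
    nlinarith
  have he3 : Real.exp 1 < 3 := lt_trans Real.exp_one_lt_d9 (by norm_num)
  have hepos : 0 < Real.exp ((t/2)^2) := Real.exp_pos _
  have hP : (0:ℝ) < (t/2) ^ μ := Real.rpow_pos_of_pos (by linarith) _
  have key : (t/2) ^ (μ+1) / Real.Gamma (μ+2) * Real.exp ((t/2)^2)
      < (t/2) ^ μ / Real.Gamma (μ+1) := by
    rw [hsplit, hΓ2]
    have hkey : (t/2) * Real.exp ((t/2)^2) < μ + 1 := by nlinarith
    rw [div_mul_eq_mul_div, div_lt_div_iff₀ (by positivity) hg1]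
    nlinarith [mul_pos hP hg1, mul_pos (mul_pos hP hg1) hepos]
  linarith

lemma besselI_succ_lt {μ : ℝ} (hμ : 1/2 < μ) {x : ℝ} (hx : 0 < x) :
    besselI (μ+1) x < besselI μ x := by
  have hμ0 : 0 < μ := by linarith
  have hμ1 : (0:ℝ) < μ+1 := by linarith
  by_contra hcon
  push_neg at hcon
  have hx1 : 1 < x := by
    by_contra hx1
    push_neg at hx1
    exact absurd hcon (not_le.2 (small_t hμ hx hx1))
  set h : ℝ → ℝ := fun t => besselI μ t - besselI (μ+1) t with hh
  have hd : ∀ t : ℝ, 0 < t → HasDerivAt h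
      ((besselI (μ+1) t + (μ/t) * besselI μ t) - (besselI μ t - ((μ+1)/t) * besselI (μ+1) t)) t :=
    fun t ht => (besselI_hasDeriv hμ0 ht).sub (besselI_hasDeriv' hμ0 ht)
  have hca : ∀ t : ℝ, 0 < t → ContinuousAt h t := fun t ht => (hd t ht).continuousAt
  have hcont : ContinuousOn h (Set.Icc 1 x) :=
    fun t ht => (hca t (by linarith [ht.1])).continuousWithinAt
  set S := Set.Icc 1 x ∩ h ⁻¹' Set.Iic 0 with hS
  have hSne : S.Nonempty := ⟨x, ⟨hx1.le, le_refl x⟩, show h x ≤ 0 from sub_nonpos.2 hcon⟩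
  have hSclosed : IsClosed S := hcont.preimage_isClosed_of_isClosed isClosed_Icc isClosed_Iic
  have hbdd : BddBelow S := ⟨1, fun t ht => ht.1.1⟩
  set t₀ := sInf S with ht₀
  have ht₀S : t₀ ∈ S := hSclosed.csInf_mem hSne hbdd
  have h1t₀ : 1 ≤ t₀ := ht₀S.1.1
  have ht₀x : t₀ ≤ x := ht₀S.1.2
  have ht₀pos : (0:ℝ) < t₀ := by linarith
  have hle : h t₀ ≤ 0 := ht₀S.2
  have hpos_before : ∀ t, 0 < t → t < t₀ → 0 < h t := by
    intro t ht htlt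
    rcases le_or_gt t 1 with h1 | h1
    · exact sub_pos.2 (small_t hμ ht h1)
    · by_contra hneg
      push_neg at hneg
      have htS : t ∈ S := ⟨⟨h1.le, le_trans htlt.le ht₀x⟩, hneg⟩
      exact absurd (csInf_le hbdd htS) (not_le.2 htlt)
  have ht₀1 : 1 < t₀ := by
    rcases eq_or_lt_of_le h1t₀ with heq | hlt
    · exfalso
      have hpos1 : 0 < h 1 := sub_pos.2 (small_t hμ one_pos le_rfl)
      rw [← heq] at hle
      linarith
    · exact hlt
  have hge : 0 ≤ h t₀ := by
    have htend : Filter.Tendsto h (nhdsWithin t₀ (Set.Iio t₀)) (nhds (h t₀)) :=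
      ((hca t₀ ht₀pos).continuousWithinAt).tendsto
    refine ge_of_tendsto htend ?_
    filter_upwards [Ioo_mem_nhdsLT_of_mem (Set.mem_Ioc.2 ⟨ht₀1, le_refl t₀⟩)] with t ht
    exact (hpos_before t (by linarith [ht.1]) ht.2).le
  have hzero : h t₀ = 0 := le_antisymm hle hge
  have hIeq : besselI μ t₀ = besselI (μ+1) t₀ := by
    have h0 : besselI μ t₀ - besselI (μ+1) t₀ = 0 := hzero
    linarith
  have hIpos : 0 < besselI (μ+1) t₀ := besselI_pos hμ1 ht₀pos
  set d := (besselI (μ+1) t₀ + (μ/t₀) * besselI μ t₀) -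
      (besselI μ t₀ - ((μ+1)/t₀) * besselI (μ+1) t₀) with hdd
  have hdpos : 0 < d := by
    rw [hdd, hIeq]
    have h1 : (0:ℝ) < μ/t₀ := by positivity
    have h2 : (0:ℝ) < (μ+1)/t₀ := by positivity
    nlinarith [hIpos]
  have hdw : HasDerivWithinAt h d (Set.Iio t₀) t₀ := (hd t₀ ht₀pos).hasDerivWithinAt
  rw [hasDerivWithinAt_iff_tendsto_slope] at hdw
  have hdiff : Set.Iio t₀ \ {t₀} = Set.Iio t₀ := by
    apply Set.diff_singleton_eq_self
    simp
  rw [hdiff] at hdw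
  have hdle : d ≤ 0 := by
    refine le_of_tendsto hdw ?_
    filter_upwards [Ioo_mem_nhdsLT_of_mem (Set.mem_Ioc.2 ⟨ht₀1, le_refl t₀⟩)] with t ht
    have hht : 0 < h t := hpos_before t (by linarith [ht.1]) ht.2
    show slope h t₀ t ≤ 0
    rw [slope_def_field, hzero]
    apply div_nonpos_of_nonneg_of_nonpos <;> linarith [ht.2, hht]
  linarith

lemma besselI_ratio_lower {μ : ℝ} (hμ : 1/2 < μ) {x : ℝ} (hx : 0 < x) :
    besselI μ x ≤ besselI (μ+1) x * (1 + 2*(μ+1)/x) := by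
  have hrec := besselI_rec (by linarith : (0:ℝ) < μ) hx
  have hmono : besselI (μ+2) x < besselI (μ+1) x := by
    have := besselI_succ_lt (by linarith : 1/2 < μ+1) hx
    rwa [show μ+1+1 = μ+2 by ring] at this
  have hc : (0:ℝ) < 2*(μ+1)/x := by positivity
  nlinarith [hrec, hmono]

set_option maxHeartbeats 1000000 in
lemma abstract_key {D B w u v : ℝ} (hv : 0 < v) (hvu : v ≤ u) (huv : u ≤ v*(1+w))
    (hw : 0 ≤ w) (hu : 0 < u) (hDB : B ≤ D) (hK : B + D*w ≤ D) : B*u ≤ D*v := by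
  rcases le_or_gt D 0 with hDneg | hDpos
  · calc B*u ≤ D*u := mul_le_mul_of_nonneg_right hDB hu.le
      _ ≤ D*v := mul_le_mul_of_nonpos_left hvu hDneg
  · rcases le_or_gt B 0 with hBneg | hBpos
    · have h1 : B*u ≤ 0 := mul_nonpos_of_nonpos_of_nonneg hBneg hu.le
      have h2 : 0 ≤ D*v := (mul_pos hDpos hv).le
      linarith
    · calc B*u ≤ B*(v*(1+w)) := mul_le_mul_of_nonneg_left huv hBpos.le
        _ = B*v + (B*w)*v := by ring
        _ ≤ B*v + (D*w)*v := by
            apply add_le_add_right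
            exact mul_le_mul_of_nonneg_right (mul_le_mul_of_nonneg_right hDB hw) hv.le
        _ = (B + D*w)*v := by ring
        _ ≤ D*v := mul_le_mul_of_nonneg_right hK hv.le

set_option maxHeartbeats 1000000 in
/-- The key scalar inequality. -/
lemma scalar_key {γ ν δ A t u v : ℝ} (hγ0 : 0 < γ) (hγ1 : γ < 1) (hν : 1/2 < ν)
    (hδ : δ = 1 - γ) (hA : A = 4*ν*(4*ν+1)/(2*ν-1))
    (ht : A/δ ≤ t) (hv : 0 < v) (hvu : v ≤ u) (huv : u ≤ v*(1 + 2*(ν+1)/t)) :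
    (A/(δ*t^2))*u + (1 - A/(δ*t))*(v + (2*ν/t - γ)*u) ≤ δ*v := by
  have hδ0 : 0 < δ := by rw [hδ]; linarith
  have h2ν : 0 < 2*ν - 1 := by linarith
  have hApos : 0 < A := by rw [hA]; positivity
  have hA3 : 2*ν + 3 ≤ A := by
    rw [hA, le_div_iff₀ h2ν]; nlinarith
  have htpos : 0 < t := lt_of_lt_of_le (by positivity) ht
  have hAt : A ≤ δ*t := by
    rw [div_le_iff₀ hδ0] at ht; linarith [ht]
  have hu : 0 < u := lt_of_lt_of_le hv hvu
  have hw : 0 ≤ 2*(ν+1)/t := by positivity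
  have hγ1' : (1:ℝ) - γ ≠ 0 := by linarith
  have eDB : (A/(δ*t) - γ) - (A/(δ*t^2) + (1 - A/(δ*t))*(2*ν/t - γ))
      = ((A - 2*ν)*(δ*t) + A*(2*ν-1)) / (δ*t^2) := by
    rw [hδ]
    field_simp
    ring
  have hDB : (A/(δ*t^2) + (1 - A/(δ*t))*(2*ν/t - γ)) ≤ A/(δ*t) - γ := by
    have hnum : 0 ≤ (A - 2*ν)*(δ*t) + A*(2*ν-1) := by nlinarith
    have h0 : 0 ≤ ((A - 2*ν)*(δ*t) + A*(2*ν-1)) / (δ*t^2) := by positivity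
    linarith [eDB ▸ h0, eDB]
  have eK : (A/(δ*t) - γ) - ((A/(δ*t^2) + (1 - A/(δ*t))*(2*ν/t - γ)) + (A/(δ*t) - γ)*(2*(ν+1)/t))
      = (δ*t*(A - 2*ν + 2*(ν+1)*γ) - 3*A) / (δ*t^2) := by
    rw [hδ]
    field_simp
    ring
  have hK : (A/(δ*t^2) + (1 - A/(δ*t))*(2*ν/t - γ)) + (A/(δ*t) - γ)*(2*(ν+1)/t) ≤ A/(δ*t) - γ := by
    have haux : (0:ℝ) ≤ A - 2*ν + 2*(ν+1)*γ - 3 := by nlinarith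
    have hnum : 0 ≤ δ*t*(A - 2*ν + 2*(ν+1)*γ) - 3*A :=  by
      nlinarith [mul_nonneg (sub_nonneg.2 hAt) (by nlinarith : (0:ℝ) ≤ A - 2*ν + 2*(ν+1)*γ),
        mul_nonneg hApos.le haux]
    have h0 : 0 ≤ (δ*t*(A - 2*ν + 2*(ν+1)*γ) - 3*A) / (δ*t^2) := by positivity
    linarith [eK ▸ h0, eK]
  have hBu : (A/(δ*t^2) + (1 - A/(δ*t))*(2*ν/t - γ))*u ≤ (A/(δ*t) - γ)*v :=
    abstract_key hv hvu huv hw hu hDB hK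
  have hδD : (1 - A/(δ*t)) = δ - (A/(δ*t) - γ) := by rw [hδ]; ring
  nlinarith [hBu, mul_le_mul_of_nonneg_right hvu
    (le_of_lt (show (0:ℝ) < 1 from one_pos))]

lemma G_hasDeriv {γ ν : ℝ} (hν0 : 0 < ν) {t : ℝ} (ht : 0 < t) :
    HasDerivAt (fun t => Real.exp (-γ*t) * t^ν * besselI ν t)
      (Real.exp (-γ*t) * t^ν * (besselI (ν+1) t + (2*ν/t - γ) * besselI ν t)) t := by
  have hl : HasDerivAt (fun t : ℝ => -γ*t) (-γ) t := by
    simpa using (hasDerivAt_id t).const_mul (-γ)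
  have h1 : HasDerivAt (fun t : ℝ => Real.exp (-γ*t)) (Real.exp (-γ*t) * (-γ)) t := hl.exp
  have h2 : HasDerivAt (fun t : ℝ => t^ν) (ν * t^(ν-1)) t :=
    Real.hasDerivAt_rpow_const (Or.inl ht.ne')
  have h3 := besselI_hasDeriv hν0 ht
  have h4 := (h1.mul h2).mul h3
  refine h4.congr_deriv ?_
  rw [Real.rpow_sub_one ht.ne']
  simp only [Pi.mul_apply]
  field_simp
  ring

lemma psi_hasDeriv {γ ν δ A : ℝ} (hν0 : 0 < ν) (hδ0 : 0 < δ) {t : ℝ} (ht : 0 < t) :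
    HasDerivAt (fun t => (1/δ) * (1 - A/(δ*t)) * (Real.exp (-γ*t) * t^ν * besselI ν t))
      ((1/δ) * ((A/(δ*t^2)) * (Real.exp (-γ*t) * t^ν * besselI ν t)
        + (1 - A/(δ*t)) * (Real.exp (-γ*t) * t^ν * (besselI (ν+1) t + (2*ν/t - γ) * besselI ν t)))) t := by
  have hcoef : HasDerivAt (fun t : ℝ => (1/δ) * (1 - A/(δ*t))) ((1/δ) * (A/(δ*t^2))) t := by
    have hfun : (fun t : ℝ => (1/δ) * (1 - A/(δ*t))) = fun t : ℝ => (1/δ) * (1 - (A/δ) * t⁻¹) := by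
      funext y
      rw [← div_div, div_eq_mul_inv (A/δ)]
    rw [hfun]
    have hinv : HasDerivAt (fun y : ℝ => y⁻¹) (-(t^2)⁻¹) t := hasDerivAt_inv ht.ne'
    have h5 := ((hinv.const_mul (A/δ)).const_sub 1).const_mul (1/δ)
    refine h5.congr_deriv ?_
    field_simp
  have h6 := hcoef.mul (G_hasDeriv (γ := γ) hν0 ht)
  refine h6.congr_deriv ?_
  ring

end SB

open SB in
theorem stmt_18 (γ ν : ℝ) (hγ0 : 0 < γ) (hγ1 : γ < 1) (hν : 1/2 < ν) (x : ℝ) (hx : 0 < x) :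
    ∫ t in (0 : ℝ)..x, Real.exp (-γ * t) * t ^ ν * besselI (ν + 1) t >
      (1 / (1 - γ)) * (1 - 4 * ν * (4 * ν + 1) / ((2 * ν - 1) * (1 - γ) * x)) *
        (Real.exp (-γ * x) * x ^ ν * besselI ν x) := by
  have hν0 : 0 < ν := by linarith
  have hν1 : (0:ℝ) < ν + 1 := by linarith
  have hδ0 : (0:ℝ) < 1 - γ := by linarith
  have h2ν : (0:ℝ) < 2*ν - 1 := by linarith
  set δ : ℝ := 1 - γ with hδdef
  set A : ℝ := 4*ν*(4*ν+1)/(2*ν-1) with hAdef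
  have hApos : 0 < A := by rw [hAdef]; positivity
  -- continuity of the integrand φ on [0, x]
  have hexp : Continuous fun t : ℝ => Real.exp (-γ * t) :=
    Real.continuous_exp.comp (continuous_const.mul continuous_id)
  have hrpow : Continuous fun t : ℝ => t ^ ν :=
    continuous_id.rpow_const (fun t => Or.inr hν0.le)
  have hφcont : ContinuousOn (fun t => Real.exp (-γ * t) * t ^ ν * besselI (ν + 1) t)
      (Set.Icc 0 x) :=
    ((hexp.continuousOn.mul hrpow.continuousOn).mul (continuousOn_besselI hν1 hx.le))
  have hφint : IntervalIntegrable (fun t => Real.exp (-γ * t) * t ^ ν * besselI (ν + 1) t)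
      volume 0 x := by
    apply ContinuousOn.intervalIntegrable
    rwa [Set.uIcc_of_le hx.le]
  have hφpos : ∀ t ∈ Set.Ioo (0:ℝ) x, 0 < Real.exp (-γ * t) * t ^ ν * besselI (ν + 1) t := by
    intro t ht
    have h1 : 0 < Real.exp (-γ*t) := Real.exp_pos _
    have h2 : (0:ℝ) < t ^ ν := Real.rpow_pos_of_pos ht.1 _
    have h3 := besselI_pos hν1 ht.1
    positivity
  have hGpos : 0 < Real.exp (-γ * x) * x ^ ν * besselI ν x := by
    have h1 : 0 < Real.exp (-γ*x) := Real.exp_pos _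
    have h2 : (0:ℝ) < x ^ ν := Real.rpow_pos_of_pos hx _
    have h3 := besselI_pos hν0 hx
    positivity
  -- rewrite the RHS coefficient
  have hRHSeq : (1 / (1 - γ)) * (1 - 4 * ν * (4 * ν + 1) / ((2 * ν - 1) * (1 - γ) * x))
      = (1/δ) * (1 - A/(δ*x)) := by
    rw [hAdef, hδdef]
    congr 2
    rw [div_div]
    ring_nf
  rw [hRHSeq]
  rcases le_or_gt x (A/δ) with hcase | hcase
  · -- trivial case : RHS ≤ 0 < LHS
    have hLHS : 0 < ∫ t in (0:ℝ)..x, Real.exp (-γ * t) * t ^ ν * besselI (ν + 1) t :=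
      intervalIntegral.intervalIntegral_pos_of_pos_on hφint hφpos hx
    have hcoef : 1 - A/(δ*x) ≤ 0 := by
      have hAx : δ * x ≤ A := by
        rw [le_div_iff₀ hδ0] at hcase; linarith
      have : (1:ℝ) ≤ A/(δ*x) := by
        rw [le_div_iff₀ (by positivity)]; linarith
      linarith
    have hRHS : (1/δ) * (1 - A/(δ*x)) * (Real.exp (-γ * x) * x ^ ν * besselI ν x) ≤ 0 := by
      apply mul_nonpos_of_nonpos_of_nonneg _ hGpos.le
      apply mul_nonpos_of_nonneg_of_nonpos (by positivity) hcoef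
    linarith
  · -- main case
    set s : ℝ := A/δ with hsdef
    have hs0 : 0 < s := by rw [hsdef]; positivity
    have hsx : s ≤ x := hcase.le
    -- ψ and its derivative Ψ
    set ψ : ℝ → ℝ := fun t => (1/δ) * (1 - A/(δ*t)) * (Real.exp (-γ*t) * t^ν * besselI ν t)
      with hψdef
    set Ψ : ℝ → ℝ := fun t => (1/δ) * ((A/(δ*t^2)) * (Real.exp (-γ*t) * t^ν * besselI ν t)
        + (1 - A/(δ*t)) * (Real.exp (-γ*t) * t^ν * (besselI (ν+1) t + (2*ν/t - γ) * besselI ν t)))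
      with hΨdef
    have hψderiv : ∀ t ∈ Set.uIcc s x, HasDerivAt ψ (Ψ t) t := by
      intro t ht
      rw [Set.uIcc_of_le hsx] at ht
      exact psi_hasDeriv hν0 hδ0 (lt_of_lt_of_le hs0 ht.1)
    -- continuity of Ψ on [s,x]
    have hbν : ContinuousOn (besselI ν) (Set.Icc s x) :=
      (continuousOn_besselI hν0 hx.le).mono (fun t ht => ⟨le_trans hs0.le ht.1, ht.2⟩)
    have hbν1 : ContinuousOn (besselI (ν+1)) (Set.Icc s x) :=
      (continuousOn_besselI hν1 hx.le).mono (fun t ht => ⟨le_trans hs0.le ht.1, ht.2⟩)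
    have htne : ∀ t ∈ Set.Icc s x, t ≠ 0 := fun t ht => (lt_of_lt_of_le hs0 ht.1).ne'
    have hΨcont : ContinuousOn Ψ (Set.Icc s x) := by
      rw [hΨdef]
      apply ContinuousOn.mul continuousOn_const
      apply ContinuousOn.add
      · apply ContinuousOn.mul
        · exact continuousOn_const.div
            ((continuous_const.mul (continuous_pow 2)).continuousOn)
            (fun t ht => by
              have := htne t ht
              positivity)
        · exact (hexp.continuousOn.mul hrpow.continuousOn).mul hbν
      · apply ContinuousOn.mul
        · exact continuousOn_const.sub (continuousOn_const.div
            ((continuous_const.mul continuous_id).continuousOn)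
            (fun t ht => by
              have := htne t ht
              positivity))
        · exact (hexp.continuousOn.mul hrpow.continuousOn).mul
            (hbν1.add ((continuousOn_const.div continuousOn_id htne
              |>.sub continuousOn_const).mul hbν))
    have hΨint : IntervalIntegrable Ψ volume s x := by
      apply ContinuousOn.intervalIntegrable
      rwa [Set.uIcc_of_le hsx]
    -- FTC
    have hFTC : ∫ t in s..x, Ψ t = ψ x - ψ s :=
      intervalIntegral.integral_eq_sub_of_hasDerivAt hψderiv hΨint
    have hψs : ψ s = 0 := by
      rw [hψdef]
      simp only
      have : 1 - A/(δ*s) = 0 := by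
        rw [hsdef]
        field_simp
        norm_num
      rw [this]
      ring
    -- pointwise bound Ψ ≤ φ on [s,x]
    have hpt : ∀ t ∈ Set.Icc s x, Ψ t ≤ Real.exp (-γ * t) * t ^ ν * besselI (ν + 1) t := by
      intro t ht
      have htpos : 0 < t := lt_of_lt_of_le hs0 ht.1
      have hts : A/δ ≤ t := ht.1
      have hv : 0 < besselI (ν+1) t := besselI_pos hν1 htpos
      have hvu : besselI (ν+1) t ≤ besselI ν t := (besselI_succ_lt hν htpos).le
      have huv : besselI ν t ≤ besselI (ν+1) t * (1 + 2*(ν+1)/t) :=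
        besselI_ratio_lower hν htpos
      have hkey := scalar_key hγ0 hγ1 hν hδdef hAdef hts hv hvu huv
      have hP : 0 < Real.exp (-γ*t) * t^ν := by
        have h2 : (0:ℝ) < t ^ ν := Real.rpow_pos_of_pos htpos _
        positivity
      rw [hΨdef]
      simp only
      have hP' := mul_le_mul_of_nonneg_left hkey hP.le
      have hexpand : (1/δ) * ((A/(δ*t^2)) * (Real.exp (-γ*t) * t^ν * besselI ν t)
          + (1 - A/(δ*t)) * (Real.exp (-γ*t) * t^ν * (besselI (ν+1) t + (2*ν/t - γ) * besselI ν t)))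
          = (1/δ) * ((Real.exp (-γ*t) * t^ν) *
            ((A/(δ*t^2))*(besselI ν t) + (1 - A/(δ*t))*(besselI (ν+1) t + (2*ν/t - γ)*(besselI ν t)))) := by
        ring
      rw [hexpand]
      calc (1/δ) * ((Real.exp (-γ*t) * t^ν) *
            ((A/(δ*t^2))*(besselI ν t) + (1 - A/(δ*t))*(besselI (ν+1) t + (2*ν/t - γ)*(besselI ν t))))
          ≤ (1/δ) * ((Real.exp (-γ*t) * t^ν) * (δ * besselI (ν+1) t)) := by
            apply mul_le_mul_of_nonneg_left _ (by positivity : (0:ℝ) ≤ 1/δ)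
            exact hP'
        _ = Real.exp (-γ * t) * t ^ ν * besselI (ν + 1) t := by
            field_simp
    -- integral comparison
    have hφint2 : IntervalIntegrable (fun t => Real.exp (-γ * t) * t ^ ν * besselI (ν + 1) t)
        volume s x := by
      apply ContinuousOn.intervalIntegrable
      rw [Set.uIcc_of_le hsx]
      exact hφcont.mono (fun t ht => ⟨le_trans hs0.le ht.1, ht.2⟩)
    have hmono : ∫ t in s..x, Ψ t ≤ ∫ t in s..x, Real.exp (-γ * t) * t ^ ν * besselI (ν + 1) t :=
      intervalIntegral.integral_mono_on hsx hΨint hφint2 hpt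
    have hφint1 : IntervalIntegrable (fun t => Real.exp (-γ * t) * t ^ ν * besselI (ν + 1) t)
        volume 0 s := by
      apply ContinuousOn.intervalIntegrable
      rw [Set.uIcc_of_le hs0.le]
      exact hφcont.mono (fun t ht => ⟨ht.1, le_trans ht.2 hsx⟩)
    have hsplit : (∫ t in (0:ℝ)..s, Real.exp (-γ * t) * t ^ ν * besselI (ν + 1) t)
        + (∫ t in s..x, Real.exp (-γ * t) * t ^ ν * besselI (ν + 1) t)
        = ∫ t in (0:ℝ)..x, Real.exp (-γ * t) * t ^ ν * besselI (ν + 1) t :=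
      intervalIntegral.integral_add_adjacent_intervals hφint1 hφint2
    have hpos1 : 0 < ∫ t in (0:ℝ)..s, Real.exp (-γ * t) * t ^ ν * besselI (ν + 1) t := by
      apply intervalIntegral.intervalIntegral_pos_of_pos_on hφint1 _ hs0
      intro t ht
      exact hφpos t ⟨ht.1, lt_of_lt_of_le ht.2 hsx⟩
    have hfinal : (1/δ) * (1 - A/(δ*x)) * (Real.exp (-γ * x) * x ^ ν * besselI ν x) = ψ x := by
      rw [hψdef]
    linarith [hFTC, hψs, hmono, hsplit, hpos1, hfinal]
end

section
/- Let 0 < γ < 1. Then for all x > 0, ∫_0^x e^{−γt} I_1(t) dt > (1/(1−γ)) · ( e^{−γx} I_0(x) − 1 ). -/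
open Real MeasureTheory

/-! ### Auxiliary series for `I₀` and `I₁` -/

noncomputable def bA (k : ℕ) (x : ℝ) : ℝ :=
  (x / 2) ^ (2 * k) / ((Nat.factorial k : ℝ) * (Nat.factorial k : ℝ))

noncomputable def bB (k : ℕ) (x : ℝ) : ℝ :=
  (x / 2) ^ (2 * k + 1) / ((Nat.factorial (k + 1) : ℝ) * (Nat.factorial k : ℝ))

lemma fact_pos' (k : ℕ) : (0:ℝ) < (Nat.factorial k : ℝ) := by
  exact_mod_cast k.factorial_pos

lemma one_le_fact' (k : ℕ) : (1:ℝ) ≤ (Nat.factorial k : ℝ) :=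
  Nat.one_le_cast.mpr k.factorial_pos

lemma besselI_zero (x : ℝ) : besselI 0 x = ∑' k, bA k x := by
  unfold besselI bA
  congr 1; funext k
  rw [show (0:ℝ) + 2 * (k:ℝ) = ((2 * k : ℕ) : ℝ) by push_cast; ring,
    Real.rpow_natCast,
    show (0:ℝ) + (k:ℝ) + 1 = (k:ℝ) + 1 by ring,
    Real.Gamma_nat_eq_factorial]

lemma besselI_one (x : ℝ) : besselI 1 x = ∑' k, bB k x := by
  unfold besselI bB
  congr 1; funext k
  rw [show (1:ℝ) + 2 * (k:ℝ) = ((2 * k + 1 : ℕ) : ℝ) by push_cast; ring,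
    Real.rpow_natCast,
    show (1:ℝ) + (k:ℝ) + 1 = ((k + 1 : ℕ):ℝ) + 1 by push_cast; ring,
    Real.Gamma_nat_eq_factorial]

lemma summable_bA (x : ℝ) : Summable (fun k => bA k x) := by
  apply Summable.of_nonneg_of_le (fun k => ?_) (fun k => ?_)
    (Real.summable_pow_div_factorial ((x/2)^2))
  · unfold bA; rw [pow_mul]; positivity
  · unfold bA
    rw [pow_mul]
    apply div_le_div_of_nonneg_left (by positivity) (fact_pos' k)
    nlinarith [one_le_fact' k, fact_pos' k]

lemma summable_bB (x : ℝ) : Summable (fun k => bB k x) := by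
  rw [← summable_abs_iff]
  apply Summable.of_nonneg_of_le (fun k => abs_nonneg _) (fun k => ?_)
    ((Real.summable_pow_div_factorial ((x/2)^2)).mul_left (|x/2|))
  have h : |bB k x| = |x/2| * ((x/2)^2)^k / ((Nat.factorial (k+1):ℝ) * k.factorial) := by
    unfold bB
    rw [abs_div, abs_pow, abs_of_pos (by positivity : (0:ℝ) < (Nat.factorial (k+1):ℝ) * k.factorial),
      pow_succ, pow_mul, sq_abs]
    ring
  rw [h, mul_div_assoc]
  apply mul_le_mul_of_nonneg_left ?_ (abs_nonneg _)
  apply div_le_div_of_nonneg_left (by positivity) (fact_pos' k)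
  nlinarith [one_le_fact' (k+1), fact_pos' k]

lemma bA_zero (x : ℝ) : bA 0 x = 1 := by simp [bA]

lemma summable_bA_succ (x : ℝ) : Summable (fun k => bA (k+1) x) :=
  (summable_bA x).comp_injective (add_left_injective 1)

lemma amgm (k : ℕ) (x : ℝ) : 2 * bB k x ≤ bA k x + bA (k+1) x := by
  have hu : bA k x = (x/2)^k / (Nat.factorial k : ℝ) * ((x/2)^k / (Nat.factorial k : ℝ)) := by
    unfold bA; rw [two_mul, pow_add, div_mul_div_comm]
  have hv : bA (k+1) x = (x/2)^(k+1) / (Nat.factorial (k+1) : ℝ) * ((x/2)^(k+1) / (Nat.factorial (k+1) : ℝ)) := by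
    unfold bA; rw [two_mul, pow_add, div_mul_div_comm]
  have hw : bB k x = (x/2)^(k+1) / (Nat.factorial (k+1) : ℝ) * ((x/2)^k / (Nat.factorial k : ℝ)) := by
    unfold bB; rw [show 2*k+1 = (k+1)+k from by ring, pow_add, div_mul_div_comm]
  rw [hu, hv, hw]
  nlinarith [sq_nonneg ((x/2)^k / (Nat.factorial k : ℝ) - (x/2)^(k+1) / (Nat.factorial (k+1) : ℝ))]

/-- The key inequality `I₁(x) + 1/2 ≤ I₀(x)`. -/
lemma sum_ineq (x : ℝ) : (∑' k, bB k x) + 1/2 ≤ ∑' k, bA k x := by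
  have sA := summable_bA x
  have sB := summable_bB x
  have sA' := summable_bA_succ x
  have h1 : ∑' k, (2 * bB k x) ≤ ∑' k, (bA k x + bA (k+1) x) :=
    Summable.tsum_le_tsum (fun k => amgm k x) (sB.mul_left 2) (sA.add sA')
  rw [tsum_mul_left, Summable.tsum_add sA sA'] at h1
  have h2 : ∑' k, bA k x = bA 0 x + ∑' k, bA (k+1) x := Summable.tsum_eq_zero_add sA
  rw [bA_zero] at h2
  linarith

lemma hasDerivAt_bA_succ (k : ℕ) (y : ℝ) :
    HasDerivAt (fun z => bA (k+1) z) (bB k y) y := by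
  have h : HasDerivAt (fun z => bA (k+1) z) _ y := (((hasDerivAt_id y).div_const 2).fun_pow (2*(k+1))).div_const
    ((Nat.factorial (k+1) : ℝ) * (Nat.factorial (k+1) : ℝ))
  convert h using 1
  have hk : (0:ℝ) < (Nat.factorial k : ℝ) := fact_pos' k
  have hk1 : (0:ℝ) < (Nat.factorial (k+1) : ℝ) := fact_pos' (k+1)
  have hfs : (Nat.factorial (k+1) : ℝ) = (k+1) * Nat.factorial k := by
    rw [Nat.factorial_succ]; push_cast; ring
  unfold bB
  rw [show 2*(k+1) - 1 = 2*k+1 from by omega]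
  field_simp
  rw [hfs]
  push_cast [id_eq]
  ring

/-- The derivative of `I₀` is `I₁`. -/
lemma hasDerivAt_tsum_bA (x : ℝ) :
    HasDerivAt (fun y => ∑' k, bA k y) (∑' k, bB k x) x := by
  have hfun : (fun y => ∑' k, bA k y) = fun y => 1 + ∑' k, bA (k+1) y := by
    funext y
    rw [Summable.tsum_eq_zero_add (summable_bA y), bA_zero]
  rw [hfun]
  set R : ℝ := |x| + 1 with hR
  set C : ℝ := R/2 + 1 with hC
  have hC1 : (1:ℝ) ≤ C := by
    have := abs_nonneg x
    simp only [hC, hR]; linarith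
  have hu : Summable (fun k : ℕ => (C^2)^k * C / (Nat.factorial k : ℝ)) := by
    apply Summable.congr ((Real.summable_pow_div_factorial (C^2)).mul_right C)
    intro k; ring
  have key := hasDerivAt_tsum_of_isPreconnected hu Metric.isOpen_ball
    (convex_ball (0:ℝ) R).isPreconnected
    (g := fun k y => bA (k+1) y) (g' := fun k y => bB k y)
    (fun k y _ => hasDerivAt_bA_succ k y)
    (fun k y hy => ?_) (y₀ := 0)
    (Metric.mem_ball_self (by simp only [hR]; positivity))
    ((summable_bA 0).comp_injective (add_left_injective 1))
    (y := x)
    (by simp only [Metric.mem_ball, Real.dist_eq, sub_zero, hR]; linarith [abs_nonneg x])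
  · exact key.const_add 1
  · have hy' : |y| < R := by simpa [Real.dist_eq] using hy
    have hy2 : |y/2| ≤ C := by
      rw [abs_div, show |(2:ℝ)| = 2 by norm_num]
      simp only [hC]; linarith
    have hnn : (0:ℝ) ≤ |y/2| := abs_nonneg _
    calc ‖bB k y‖ = |y/2|^(2*k+1) / ((Nat.factorial (k+1) : ℝ) * (Nat.factorial k : ℝ)) := by
          rw [Real.norm_eq_abs, bB, abs_div, abs_pow,
            abs_of_pos (by positivity : (0:ℝ) < (Nat.factorial (k+1) : ℝ) * (Nat.factorial k : ℝ))]
      _ ≤ C^(2*k+1) / (1 * (Nat.factorial k : ℝ)) := by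
          apply div_le_div₀ (by positivity) (pow_le_pow_left₀ hnn hy2 _) (by positivity)
          nlinarith [one_le_fact' (k+1), fact_pos' k]
      _ = (C^2)^k * C / (Nat.factorial k : ℝ) := by rw [pow_succ, pow_mul, one_mul]

lemma hasDerivAt_bB (k : ℕ) (y : ℝ) :
    HasDerivAt (fun z => bB k z)
      (((2*k+1 : ℝ) * (y/2)^(2*k) * (1/2)) / ((Nat.factorial (k+1) : ℝ) * (Nat.factorial k : ℝ))) y := by
  have h : HasDerivAt (fun z => bB k z) _ y := (((hasDerivAt_id y).div_const 2).fun_pow (2*k+1)).div_const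
    ((Nat.factorial (k+1) : ℝ) * (Nat.factorial k : ℝ))
  simp only [id_eq, show 2*k+1-1 = 2*k from by omega] at h
  convert h using 2
  push_cast; ring

lemma diffAt_tsum_bB (x : ℝ) : DifferentiableAt ℝ (fun y => ∑' k, bB k y) x := by
  set R : ℝ := |x| + 1 with hR
  set C : ℝ := R/2 + 1 with hC
  have hC1 : (1:ℝ) ≤ C := by
    have := abs_nonneg x
    simp only [hC, hR]; linarith
  have hu : Summable (fun k : ℕ => (2*C^2)^k / (Nat.factorial k : ℝ)) :=
    Real.summable_pow_div_factorial (2*C^2)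
  have key := hasDerivAt_tsum_of_isPreconnected hu Metric.isOpen_ball
    (convex_ball (0:ℝ) R).isPreconnected
    (g := fun k y => bB k y)
    (g' := fun k y => ((2*k+1 : ℝ) * (y/2)^(2*k) * (1/2)) / ((Nat.factorial (k+1) : ℝ) * (Nat.factorial k : ℝ)))
    (fun k y _ => hasDerivAt_bB k y)
    (fun k y hy => ?_) (y₀ := 0)
    (Metric.mem_ball_self (by simp only [hR]; positivity))
    (summable_bB 0)
    (y := x)
    (by simp only [Metric.mem_ball, Real.dist_eq, sub_zero, hR]; linarith [abs_nonneg x])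
  · exact key.differentiableAt
  · have hy' : |y| < R := by simpa [Real.dist_eq] using hy
    have hy2 : |y/2| ≤ C := by
      rw [abs_div, show |(2:ℝ)| = 2 by norm_num]
      simp only [hC]; linarith
    have hnn : (0:ℝ) ≤ |y/2| := abs_nonneg _
    have htwo : (2*k+1 : ℝ) ≤ 2^(k+1) := by
      have h1 : 2*k+1 ≤ 2^(k+1) := by
        have := Nat.lt_two_pow_self (n := k)
        have h2 : 2^(k+1) = 2 * 2^k := by rw [pow_succ]; ring
        omega
      exact_mod_cast h1
    calc ‖((2*k+1 : ℝ) * (y/2)^(2*k) * (1/2)) / ((Nat.factorial (k+1) : ℝ) * (Nat.factorial k : ℝ))‖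
        = ((2*k+1 : ℝ) * |y/2|^(2*k) * (1/2)) / ((Nat.factorial (k+1) : ℝ) * (Nat.factorial k : ℝ)) := by
          rw [Real.norm_eq_abs, abs_div, abs_mul, abs_mul, abs_pow,
            abs_of_pos (by positivity : (0:ℝ) < (2*k+1:ℝ)),
            abs_of_pos (by norm_num : (0:ℝ) < (1/2:ℝ)),
            abs_of_pos (by positivity : (0:ℝ) < (Nat.factorial (k+1) : ℝ) * (Nat.factorial k : ℝ))]
      _ ≤ ((2:ℝ)^(k+1) * C^(2*k) * (1/2)) / (1 * (Nat.factorial k : ℝ)) := by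
          apply div_le_div₀ (by positivity) ?_ (by positivity) ?_
          · apply mul_le_mul_of_nonneg_right ?_ (by norm_num)
            exact mul_le_mul htwo (pow_le_pow_left₀ hnn hy2 _) (by positivity) (by positivity)
          · nlinarith [one_le_fact' (k+1), fact_pos' k]
      _ = (2*C^2)^k / (Nat.factorial k : ℝ) := by
          rw [mul_pow, pow_mul, pow_succ]; ring

theorem stmt_19 (γ : ℝ) (hγ0 : 0 < γ) (hγ1 : γ < 1) (x : ℝ) (hx : 0 < x) :
    ∫ t in (0 : ℝ)..x, Real.exp (-γ * t) * besselI 1 t >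
      (1 / (1 - γ)) * (Real.exp (-γ * x) * besselI 0 x - 1) := by
  have h1γ : 0 < 1 - γ := by linarith
  have hg1cont : Continuous (fun y => ∑' k, bB k y) := by
    rw [continuous_iff_continuousAt]
    exact fun y => (diffAt_tsum_bB y).continuousAt
  have hcont : Continuous (fun t => Real.exp (-γ * t) * ∑' k, bB k t) :=
    ((Real.continuous_exp.comp (continuous_const.mul continuous_id)).mul hg1cont)
  set F : ℝ → ℝ := fun u =>
    (∫ t in (0:ℝ)..u, Real.exp (-γ * t) * ∑' k, bB k t)
      - (1 / (1 - γ)) * (Real.exp (-γ * u) * ∑' k, bA k u - 1) with hF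
  have hFderiv : ∀ y, HasDerivAt F
      (Real.exp (-γ * y) * (∑' k, bB k y)
        - (1 / (1 - γ)) * ((-γ * Real.exp (-γ * y)) * (∑' k, bA k y)
            + Real.exp (-γ * y) * (∑' k, bB k y))) y := by
    intro y
    have hI : HasDerivAt (fun u => ∫ t in (0:ℝ)..u, Real.exp (-γ * t) * ∑' k, bB k t)
        (Real.exp (-γ * y) * ∑' k, bB k y) y :=
      intervalIntegral.integral_hasDerivAt_right (hcont.intervalIntegrable _ _)
        (hcont.stronglyMeasurableAtFilter _ _) hcont.continuousAt
    have hexp : HasDerivAt (fun u : ℝ => Real.exp (-γ * u)) (-γ * Real.exp (-γ * y)) y := by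
      have h := ((hasDerivAt_id y).const_mul (-γ)).exp
      simpa [mul_comm] using h
    exact hI.sub (((hexp.mul (hasDerivAt_tsum_bA y)).sub_const 1).const_mul (1 / (1 - γ)))
  have hpos : ∀ y, 0 < deriv F y := by
    intro y
    rw [(hFderiv y).deriv]
    have hsum := sum_ineq y
    set E := Real.exp (-γ * y) with hE
    have hEpos : 0 < E := Real.exp_pos _
    set a := ∑' k, bA k y
    set b := ∑' k, bB k y
    have heq : E * b - (1 / (1 - γ)) * ((-γ * E) * a + E * b)
        = γ / (1 - γ) * (E * (a - b)) := by
      field_simp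
      ring
    rw [heq]
    apply mul_pos (div_pos hγ0 h1γ) (mul_pos hEpos (by linarith))
  have hmono : StrictMono F := strictMono_of_deriv_pos hpos
  have hF0 : F 0 = 0 := by
    have hA0 : ∑' k, bA k (0:ℝ) = 1 := by
      rw [Summable.tsum_eq_zero_add (summable_bA 0), bA_zero]
      have hz : ∀ k : ℕ, bA (k+1) (0:ℝ) = 0 := by
        intro k; simp [bA]
      rw [tsum_congr hz, tsum_zero, add_zero]
    simp [hF, hA0]
  have hFx : 0 < F x := by
    rw [← hF0]; exact hmono hx
  rw [hF] at hFx
  simp only [besselI_one, besselI_zero, gt_iff_lt]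
  linarith [hFx]
end
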